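/- arXiv:1401.2262 — 3 statements merged into one kernel-verified Lean document; each statement's English description precedes it below -/
import Mathlib

section
/- Let d ≥ 1 be an integer, let m, r ≥ 0, p > 1 and t ∈ (0,1] be real numbers, and assume either (i) p > m−1 and β := p+1−m, or (ii) r > m−2 and β := (r+2−m)/2; assume moreover m+β−2 > 0. Let 0 < ε < δ < 1/β, α > 0, and define W(s,x) = exp(ε(t−s)^α‖x‖^β). Then for every constant C ≥ 1 there exists a constant C̃ > 0 such that for every s ∈ (0,t) and every x ∈ ℝ^d with 1 ≤ ‖x‖ ≤ C(t−s)^{−1/(m+β−2)} one has ∂_s W(s,x) − [ (1+‖x‖^m)·Δ_x W(s,x) − ‖x‖^{p−1}·⟨x, ∇_x W(s,x)⟩ − ‖x‖^r·W(s,x) ] ≥ −C̃ (t−s)^{α−1−β/(m+β−2)} W(s,x). -/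
open RealInnerProductSpace Filter MeasureTheory
open scoped BigOperators

/-- The `i`-th partial derivative of `f : ℝ^d → ℝ`. -/
noncomputable def pderiv' {d : ℕ} (f : EuclideanSpace ℝ (Fin d) → ℝ) (i : Fin d)
    (x : EuclideanSpace ℝ (Fin d)) : ℝ :=
  fderiv ℝ f x (EuclideanSpace.single i 1)

/-- The Laplacian (sum of second partial derivatives) of `f : ℝ^d → ℝ`. -/
noncomputable def laplacian' {d : ℕ} (f : EuclideanSpace ℝ (Fin d) → ℝ)
    (x : EuclideanSpace ℝ (Fin d)) : ℝ :=
  ∑ i, pderiv' (pderiv' f i) i x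

section aux
variable {d : ℕ}

lemma sum_mul_self_eq (x : EuclideanSpace ℝ (Fin d)) : ∑ i, x i * x i = ‖x‖ ^ 2 := by
  rw [← real_inner_self_eq_norm_sq]
  simp only [PiLp.inner_apply, RCLike.inner_apply, conj_trivial]

lemma hasFDerivAt_Q (x : EuclideanSpace ℝ (Fin d)) :
    HasFDerivAt (fun y : EuclideanSpace ℝ (Fin d) => ∑ i, y i * y i)
      (∑ i, (2 * x i) • (EuclideanSpace.proj (𝕜 := ℝ) i)) x := by
  have h : ∀ i : Fin d, HasFDerivAt (fun y : EuclideanSpace ℝ (Fin d) => y i * y i)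
      ((2 * x i) • (EuclideanSpace.proj (𝕜 := ℝ) i)) x := by
    intro i
    have hp : HasFDerivAt (fun y : EuclideanSpace ℝ (Fin d) => y i)
        (EuclideanSpace.proj (𝕜 := ℝ) i) x := (EuclideanSpace.proj (𝕜 := ℝ) i).hasFDerivAt
    have := hp.fun_mul hp
    refine this.congr_fderiv ?_
    ext v
    simp [two_mul]
    ring
  exact HasFDerivAt.fun_sum (fun i _ => h i)

lemma Q'_single (x : EuclideanSpace ℝ (Fin d)) (j : Fin d) :
    (∑ i, (2 * x i) • (EuclideanSpace.proj (𝕜 := ℝ) i)) (EuclideanSpace.single j 1)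
      = 2 * x j := by
  simp [ContinuousLinearMap.sum_apply, EuclideanSpace.single_apply]

lemma Q'_self (x : EuclideanSpace ℝ (Fin d)) :
    (∑ i, (2 * x i) • (EuclideanSpace.proj (𝕜 := ℝ) i)) x = 2 * ∑ i, x i * x i := by
  simp only [ContinuousLinearMap.sum_apply, ContinuousLinearMap.smul_apply, smul_eq_mul,
    Finset.mul_sum]
  apply Finset.sum_congr rfl
  intro i _
  simp [mul_assoc]

end aux

section aux2
variable {d : ℕ}

lemma Qpos (x : EuclideanSpace ℝ (Fin d)) (hx : x ≠ 0) : 0 < ∑ i, x i * x i := by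
  rw [sum_mul_self_eq]
  have : 0 < ‖x‖ := norm_pos_iff.mpr hx
  nlinarith

lemma hasFDerivAt_F (a c : ℝ) (x : EuclideanSpace ℝ (Fin d)) (hx : x ≠ 0) :
    HasFDerivAt (fun y : EuclideanSpace ℝ (Fin d) => Real.exp (a * (∑ i, y i * y i) ^ c))
      ((Real.exp (a * (∑ i, x i * x i) ^ c) * (a * (c * (∑ i, x i * x i) ^ (c - 1)))) •
        (∑ i, (2 * x i) • (EuclideanSpace.proj (𝕜 := ℝ) i))) x := by
  have hQ := hasFDerivAt_Q x
  have hne : (∑ i, x i * x i) ≠ 0 := (Qpos x hx).ne'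
  have h1 := (hQ.rpow_const (p := c) (Or.inl hne)).const_mul a
  have h2 := h1.exp
  refine h2.congr_fderiv ?_
  rw [smul_smul, smul_smul]
  congr 1
  ring

lemma pderiv_F (a c : ℝ) (x : EuclideanSpace ℝ (Fin d)) (hx : x ≠ 0) (j : Fin d) :
    pderiv' (fun y : EuclideanSpace ℝ (Fin d) => Real.exp (a * (∑ i, y i * y i) ^ c)) j x
      = Real.exp (a * (∑ i, x i * x i) ^ c) * (a * (c * (∑ i, x i * x i) ^ (c - 1)))
          * (2 * x j) := by
  unfold pderiv'
  rw [(hasFDerivAt_F a c x hx).fderiv]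
  rw [ContinuousLinearMap.smul_apply, Q'_single]
  simp [mul_assoc]

end aux2

section aux3
variable {d : ℕ}

lemma second_F (a c : ℝ) (x : EuclideanSpace ℝ (Fin d)) (hx : x ≠ 0) (j : Fin d) :
    pderiv' (pderiv' (fun y : EuclideanSpace ℝ (Fin d) =>
        Real.exp (a * (∑ i, y i * y i) ^ c)) j) j x
      = 2 * Real.exp (a * (∑ i, x i * x i) ^ c) * (a * c * (∑ i, x i * x i) ^ (c - 1))
        + (4 * (Real.exp (a * (∑ i, x i * x i) ^ c) * (a * c * (c - 1) * (∑ i, x i * x i) ^ (c - 1 - 1))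
            + Real.exp (a * (∑ i, x i * x i) ^ c) * (a * c * (∑ i, x i * x i) ^ (c - 1)) * (a * c * (∑ i, x i * x i) ^ (c - 1))))
          * (x j * x j) := by
  have hne : (∑ i, x i * x i) ≠ 0 := (Qpos x hx).ne'
  have hev : (pderiv' (fun y : EuclideanSpace ℝ (Fin d) =>
      Real.exp (a * (∑ i, y i * y i) ^ c)) j) =ᶠ[nhds x]
      (fun y => Real.exp (a * (∑ i, y i * y i) ^ c) * (a * (c * (∑ i, y i * y i) ^ (c - 1)))
        * (2 * y j)) := by
    filter_upwards [isOpen_compl_singleton.mem_nhds hx] with y hy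
    exact pderiv_F a c y hy j
  have hQ := hasFDerivAt_Q x
  have hF := hasFDerivAt_F a c x hx
  have hK : HasFDerivAt (fun y : EuclideanSpace ℝ (Fin d) =>
      a * (c * (∑ i, y i * y i) ^ (c - 1)))
      (a • (c • (((c - 1) * (∑ i, x i * x i) ^ (c - 1 - 1)) •
        (∑ i, (2 * x i) • (EuclideanSpace.proj (𝕜 := ℝ) i))))) x :=
    ((hQ.rpow_const (p := c - 1) (Or.inl hne)).const_mul c).const_mul a
  have hL : HasFDerivAt (fun y : EuclideanSpace ℝ (Fin d) => 2 * y j)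
      ((2 : ℝ) • (EuclideanSpace.proj (𝕜 := ℝ) j)) x :=
    (EuclideanSpace.proj (𝕜 := ℝ) j).hasFDerivAt.const_mul 2
  have hG := (hF.fun_mul hK).fun_mul hL
  unfold pderiv' at hev ⊢
  rw [hev.fderiv_eq, hG.fderiv]
  simp only [ContinuousLinearMap.add_apply, ContinuousLinearMap.smul_apply, Q'_single,
    smul_eq_mul]
  simp [EuclideanSpace.single_apply]
  ring

end aux3

section aux4
variable {d : ℕ}

lemma laplacian_F (a c : ℝ) (x : EuclideanSpace ℝ (Fin d)) (hx : x ≠ 0) :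
    laplacian' (fun y : EuclideanSpace ℝ (Fin d) =>
        Real.exp (a * (∑ i, y i * y i) ^ c)) x
      = 2 * d * Real.exp (a * (∑ i, x i * x i) ^ c) * (a * c * (∑ i, x i * x i) ^ (c - 1))
        + 4 * (Real.exp (a * (∑ i, x i * x i) ^ c) * (a * c * (c - 1) * (∑ i, x i * x i) ^ (c - 1 - 1))
            + Real.exp (a * (∑ i, x i * x i) ^ c) * (a * c * (∑ i, x i * x i) ^ (c - 1)) * (a * c * (∑ i, x i * x i) ^ (c - 1)))
          * (∑ i, x i * x i) := by
  unfold laplacian'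
  rw [Finset.sum_congr rfl (fun j _ => second_F a c x hx j)]
  rw [Finset.sum_add_distrib, Finset.sum_const, ← Finset.mul_sum]
  simp only [Finset.card_univ, Fintype.card_fin, nsmul_eq_mul]
  ring

lemma inner_grad_F (a c : ℝ) (x : EuclideanSpace ℝ (Fin d)) (hx : x ≠ 0) :
    ⟪x, gradient (fun y : EuclideanSpace ℝ (Fin d) =>
        Real.exp (a * (∑ i, y i * y i) ^ c)) x⟫
      = Real.exp (a * (∑ i, x i * x i) ^ c) * (a * c * (∑ i, x i * x i) ^ (c - 1))
          * (2 * (∑ i, x i * x i)) := by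
  rw [real_inner_comm, gradient, InnerProductSpace.toDual_symm_apply,
    (hasFDerivAt_F a c x hx).fderiv, ContinuousLinearMap.smul_apply, Q'_self]
  simp only [smul_eq_mul]
  ring

end aux4

lemma deriv_W_time (e al t K s : ℝ) (h : s < t) :
    deriv (fun u => Real.exp (e * (t - u) ^ al * K)) s
      = Real.exp (e * (t - s) ^ al * K) * (-(e * al * (t - s) ^ (al - 1) * K)) := by
  have h1 : HasDerivAt (fun u : ℝ => t - u) (-1) s := (hasDerivAt_id s).const_sub t
  have hne : t - s ≠ 0 := by linarith
  have h2 := h1.rpow_const (p := al) (Or.inl hne)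
  have h3 := (h2.const_mul e).mul_const K
  have h4 := h3.exp
  rw [h4.deriv]
  ring

lemma bound_piece (σ C u κ R : ℝ) (hσ0 : 0 < σ) (hC : 0 < C) (hR : 0 ≤ R) (_hκ : 0 < κ)
    (hu : 0 ≤ u) (hRC : R ≤ C * σ ^ (-(1/κ))) : R ^ u ≤ C ^ u * σ ^ (-(u/κ)) := by
  calc R ^ u ≤ (C * σ ^ (-(1/κ))) ^ u := Real.rpow_le_rpow hR hRC hu
    _ = C ^ u * (σ ^ (-(1/κ))) ^ u :=
        Real.mul_rpow hC.le (Real.rpow_nonneg hσ0.le _)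
    _ = C ^ u * σ ^ (-(1/κ) * u) := by rw [← Real.rpow_mul hσ0.le]
    _ = C ^ u * σ ^ (-(u/κ)) := by rw [show -(1/κ) * u = -(u/κ) by ring]
theorem time_dep_lyapunov_case2 (d : ℕ) (hd : 1 ≤ d) (m r p t β ε δ α : ℝ)
    (hm : 0 ≤ m) (hr : 0 ≤ r) (hp : 1 < p) (ht0 : 0 < t) (ht1 : t ≤ 1)
    (hcase : (p > m - 1 ∧ β = p + 1 - m) ∨ (r > m - 2 ∧ β = (r + 2 - m) / 2))
    (hmβ : 0 < m + β - 2)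
    (hε : 0 < ε) (hεδ : ε < δ) (hδ : δ < 1 / β) (hα : 0 < α)
    (W : ℝ → EuclideanSpace ℝ (Fin d) → ℝ)
    (hW : ∀ s x, W s x = Real.exp (ε * (t - s) ^ α * ‖x‖ ^ β)) :
    ∀ C : ℝ, 1 ≤ C →
      ∃ Ctilde : ℝ, 0 < Ctilde ∧
        ∀ s ∈ Set.Ioo (0 : ℝ) t, ∀ x : EuclideanSpace ℝ (Fin d),
          1 ≤ ‖x‖ → ‖x‖ ≤ C * (t - s) ^ (-(1 / (m + β - 2))) →
          deriv (fun σ => W σ x) s -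
              ((1 + ‖x‖ ^ m) * laplacian' (W s) x
                - ‖x‖ ^ (p - 1) * ⟪x, gradient (W s) x⟫
                - ‖x‖ ^ r * W s x) ≥
            -Ctilde * (t - s) ^ (α - 1 - β / (m + β - 2)) * W s x := by
  have hβ : 0 < β := by rcases hcase with ⟨h1, h2⟩ | ⟨h1, h2⟩ <;> linarith
  have hd1 : (1 : ℝ) ≤ (d : ℝ) := by exact_mod_cast hd
  intro C hC
  have hC0 : (0 : ℝ) < C := lt_of_lt_of_le one_pos hC
  refine ⟨ε*α*C^β + 2*ε*β*((d:ℝ)+β)*C^(m+β-2) + 2*ε^2*β^2*C^(m+β-2+β), ?_, ?_⟩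
  · have h1 : 0 < ε*α*C^β := mul_pos (mul_pos hε hα) (Real.rpow_pos_of_pos hC0 β)
    have h2 : 0 ≤ 2*ε*β*((d:ℝ)+β)*C^(m+β-2) := by
      apply mul_nonneg
      apply mul_nonneg
      apply mul_nonneg
      · linarith
      · linarith
      · linarith
      · exact (Real.rpow_pos_of_pos hC0 _).le
    have h3 : 0 ≤ 2*ε^2*β^2*C^(m+β-2+β) := by
      apply mul_nonneg
      · apply mul_nonneg
        · nlinarith
        · nlinarith
      · exact (Real.rpow_pos_of_pos hC0 _).le
    linarith
  intro s hs x hx1 hxC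
  obtain ⟨hs0, hst⟩ := hs
  have hσ0 : 0 < t - s := by linarith
  have hσ1 : t - s ≤ 1 := by linarith
  have hR0 : (0 : ℝ) < ‖x‖ := lt_of_lt_of_le one_pos hx1
  have hx0 : x ≠ 0 := by
    intro h
    rw [h, norm_zero] at hR0
    exact lt_irrefl 0 hR0
  have hQx : (∑ i, x i * x i) = ‖x‖ ^ 2 := sum_mul_self_eq x
  -- power conversion facts
  have gg : ∀ u : ℝ, ((‖x‖ : ℝ) ^ 2) ^ u = ‖x‖ ^ (2 * u) := by
    intro u
    rw [← Real.rpow_natCast ‖x‖ 2, ← Real.rpow_mul (norm_nonneg x)]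
    norm_num
  have g0 : ((‖x‖ : ℝ) ^ 2) ^ (β/2) = ‖x‖ ^ β := by
    rw [gg, show 2 * (β/2) = β by ring]
  have g1 : ((‖x‖ : ℝ) ^ 2) ^ (β/2 - 1) = ‖x‖ ^ (β - 2) := by
    rw [gg, show 2 * (β/2 - 1) = β - 2 by ring]
  have g2 : ((‖x‖ : ℝ) ^ 2) ^ (β/2 - 1 - 1) = ‖x‖ ^ (β - 4) := by
    rw [gg, show 2 * (β/2 - 1 - 1) = β - 4 by ring]
  have hsq : ((‖x‖ : ℝ) ^ 2) = ‖x‖ ^ (2:ℝ) := (Real.rpow_natCast ‖x‖ 2).symm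
  have f1 : (‖x‖ : ℝ) ^ (β - 4) * ‖x‖ ^ 2 = ‖x‖ ^ (β - 2) := by
    rw [hsq, ← Real.rpow_add hR0, show β - 4 + 2 = β - 2 by ring]
  have f2 : (‖x‖ : ℝ) ^ (β - 2) * ‖x‖ ^ (β - 2) * ‖x‖ ^ 2 = ‖x‖ ^ (2*β - 2) := by
    rw [hsq, ← Real.rpow_add hR0, ← Real.rpow_add hR0,
      show β - 2 + (β - 2) + 2 = 2*β - 2 by ring]
  have f3 : (‖x‖ : ℝ) ^ (β - 2) * ‖x‖ ^ 2 = ‖x‖ ^ β := by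
    rw [hsq, ← Real.rpow_add hR0, show β - 2 + 2 = β by ring]
  -- identify W s with the model function
  have hWs : W s = (fun y : EuclideanSpace ℝ (Fin d) =>
      Real.exp (ε * (t-s)^α * (∑ i, y i * y i) ^ (β/2))) := by
    funext y
    rw [hW]
    congr 1
    rw [sum_mul_self_eq]
    congr 1
    rw [← Real.rpow_natCast ‖y‖ 2, ← Real.rpow_mul (norm_nonneg y)]
    congr 1
    push_cast
    ring
  set Ev : ℝ := Real.exp (ε * (t-s)^α * ‖x‖ ^ β) with hEvdef
  have hEv : 0 < Ev := Real.exp_pos _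
  have hWsx : W s x = Ev := hW s x
  -- time derivative
  have hDer : deriv (fun u => W u x) s = Ev * (-(ε * α * (t-s)^(α-1) * ‖x‖^β)) := by
    have heq : (fun u => W u x) = fun u => Real.exp (ε * (t-u)^α * ‖x‖^β) :=
      funext fun u => hW u x
    rw [heq, deriv_W_time ε α t (‖x‖^β) s hst]
  -- Laplacian
  have hLap := laplacian_F (ε * (t-s)^α) (β/2) x hx0
  rw [hQx, g0, g1, g2] at hLap
  rw [← hWs] at hLap
  have hLap2 : laplacian' (W s) x
      = Ev * (ε*(t-s)^α*β*((d:ℝ)+β-2)*‖x‖^(β-2) + (ε*(t-s)^α)^2*β^2*‖x‖^(2*β-2)) := by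
    rw [hLap]
    linear_combination (Ev*(ε*(t-s)^α)*β*(β-2))*f1 + (Ev*(ε*(t-s)^α)^2*β^2)*f2
  -- gradient
  have hGrad := inner_grad_F (ε * (t-s)^α) (β/2) x hx0
  rw [hQx, g0, g1] at hGrad
  rw [← hWs] at hGrad
  have hGrad2 : ⟪x, gradient (W s) x⟫ = Ev * (ε*(t-s)^α*β*‖x‖^β) := by
    rw [hGrad]
    linear_combination (Ev*(ε*(t-s)^α)*β)*f3
  -- nonnegativity facts
  have hRm : (1:ℝ) ≤ ‖x‖ ^ m := Real.one_le_rpow hx1 hm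
  have hRb2 : (0:ℝ) ≤ ‖x‖ ^ (β-2) := Real.rpow_nonneg (norm_nonneg x) _
  have hR2b2 : (0:ℝ) ≤ ‖x‖ ^ (2*β-2) := Real.rpow_nonneg (norm_nonneg x) _
  have hσα : (0:ℝ) ≤ (t-s) ^ α := Real.rpow_nonneg hσ0.le _
  have hσα1 : (0:ℝ) ≤ (t-s) ^ (α-1) := Real.rpow_nonneg hσ0.le _
  have hσγ0 : (0:ℝ) ≤ (t-s) ^ (α-1-β/(m+β-2)) := Real.rpow_nonneg hσ0.le _
  -- the three estimates
  have T1 : ε*α*(t-s)^(α-1)*‖x‖^β ≤ ε*α*C^β*(t-s)^(α-1-β/(m+β-2)) := by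
    have hb := bound_piece (t-s) C β (m+β-2) ‖x‖ hσ0 hC0 (norm_nonneg x) hmβ hβ.le hxC
    calc ε*α*(t-s)^(α-1)*‖x‖^β
        ≤ ε*α*(t-s)^(α-1)*(C^β*(t-s)^(-(β/(m+β-2)))) := by
          apply mul_le_mul_of_nonneg_left hb
          apply mul_nonneg (by positivity) hσα1
      _ = ε*α*C^β*((t-s)^(α-1)*(t-s)^(-(β/(m+β-2)))) := by ring
      _ = ε*α*C^β*(t-s)^(α-1-β/(m+β-2)) := by
          rw [← Real.rpow_add hσ0, show α-1 + -(β/(m+β-2)) = α-1-β/(m+β-2) by ring]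
  have hσmono : (t-s)^(α-1:ℝ) ≤ (t-s)^(α-1-β/(m+β-2)) := by
    apply Real.rpow_le_rpow_of_exponent_ge hσ0 hσ1
    have : 0 ≤ β/(m+β-2) := div_nonneg hβ.le hmβ.le
    linarith
  have hRκ : ‖x‖^m * ‖x‖^(β-2) ≤ C^(m+β-2) * (t-s)^(-(1:ℝ)) := by
    have hb := bound_piece (t-s) C (m+β-2) (m+β-2) ‖x‖ hσ0 hC0 (norm_nonneg x) hmβ hmβ.le hxC
    rw [div_self hmβ.ne'] at hb
    calc ‖x‖^m * ‖x‖^(β-2) = ‖x‖^(m+β-2) := by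
          rw [← Real.rpow_add hR0, show m + (β-2) = m+β-2 by ring]
      _ ≤ _ := hb
  have T2 : (1+‖x‖^m)*(ε*(t-s)^α*β*((d:ℝ)+β-2)*‖x‖^(β-2))
      ≤ 2*ε*β*((d:ℝ)+β)*C^(m+β-2)*(t-s)^(α-1-β/(m+β-2)) := by
    have hM : 0 ≤ (1+‖x‖^m)*(ε*(t-s)^α*β*‖x‖^(β-2)) := by
      apply mul_nonneg (by linarith)
      apply mul_nonneg (mul_nonneg (mul_nonneg hε.le hσα) hβ.le) hRb2
    have hS : 0 ≤ ε*(t-s)^α*β*((d:ℝ)+β)*‖x‖^(β-2) := by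
      apply mul_nonneg (mul_nonneg (mul_nonneg (mul_nonneg hε.le hσα) hβ.le) (by linarith)) hRb2
    have hcoef : (0:ℝ) ≤ 2*ε*β*((d:ℝ)+β) := by
      apply mul_nonneg (mul_nonneg (by linarith) hβ.le) (by linarith)
    calc (1+‖x‖^m)*(ε*(t-s)^α*β*((d:ℝ)+β-2)*‖x‖^(β-2))
        ≤ (1+‖x‖^m)*(ε*(t-s)^α*β*((d:ℝ)+β)*‖x‖^(β-2)) := by linarith [hM]
      _ ≤ (2*‖x‖^m)*(ε*(t-s)^α*β*((d:ℝ)+β)*‖x‖^(β-2)) :=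
          mul_le_mul_of_nonneg_right (by linarith) hS
      _ = (2*ε*β*((d:ℝ)+β)) * ((t-s)^α * (‖x‖^m * ‖x‖^(β-2))) := by ring
      _ ≤ (2*ε*β*((d:ℝ)+β)) * ((t-s)^α * (C^(m+β-2) * (t-s)^(-(1:ℝ)))) := by
          apply mul_le_mul_of_nonneg_left _ hcoef
          exact mul_le_mul_of_nonneg_left hRκ hσα
      _ = (2*ε*β*((d:ℝ)+β)*C^(m+β-2)) * ((t-s)^α * (t-s)^(-(1:ℝ))) := by ring
      _ = (2*ε*β*((d:ℝ)+β)*C^(m+β-2)) * (t-s)^(α-1) := by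
          rw [← Real.rpow_add hσ0, show α + -(1:ℝ) = α-1 by ring]
      _ ≤ (2*ε*β*((d:ℝ)+β)*C^(m+β-2)) * (t-s)^(α-1-β/(m+β-2)) := by
          apply mul_le_mul_of_nonneg_left hσmono
          exact mul_nonneg hcoef (Real.rpow_pos_of_pos hC0 _).le
      _ = 2*ε*β*((d:ℝ)+β)*C^(m+β-2)*(t-s)^(α-1-β/(m+β-2)) := by ring
  have hRκβ : ‖x‖^m * ‖x‖^(2*β-2) ≤ C^(m+β-2+β) * (t-s)^(-((m+β-2+β)/(m+β-2))) := by
    have hb := bound_piece (t-s) C (m+β-2+β) (m+β-2) ‖x‖ hσ0 hC0 (norm_nonneg x) hmβ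
      (by linarith) hxC
    calc ‖x‖^m * ‖x‖^(2*β-2) = ‖x‖^(m+β-2+β) := by
          rw [← Real.rpow_add hR0, show m + (2*β-2) = m+β-2+β by ring]
      _ ≤ _ := hb
  have hσ3 : (t-s)^α * ((t-s)^α * (t-s)^(-((m+β-2+β)/(m+β-2))))
      ≤ (t-s)^(α-1-β/(m+β-2)) := by
    rw [← Real.rpow_add hσ0, ← Real.rpow_add hσ0]
    apply Real.rpow_le_rpow_of_exponent_ge hσ0 hσ1
    have hdiv : (m+β-2+β)/(m+β-2) = 1 + β/(m+β-2) := by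
      field_simp
    rw [hdiv]
    linarith
  have T3 : (1+‖x‖^m)*((ε*(t-s)^α)^2*β^2*‖x‖^(2*β-2))
      ≤ 2*ε^2*β^2*C^(m+β-2+β)*(t-s)^(α-1-β/(m+β-2)) := by
    have hS : 0 ≤ (ε*(t-s)^α)^2*β^2*‖x‖^(2*β-2) := by positivity
    calc (1+‖x‖^m)*((ε*(t-s)^α)^2*β^2*‖x‖^(2*β-2))
        ≤ (2*‖x‖^m)*((ε*(t-s)^α)^2*β^2*‖x‖^(2*β-2)) :=
          mul_le_mul_of_nonneg_right (by linarith) hS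
      _ = (2*ε^2*β^2) * ((t-s)^α * ((t-s)^α * (‖x‖^m * ‖x‖^(2*β-2)))) := by ring
      _ ≤ (2*ε^2*β^2) * ((t-s)^α * ((t-s)^α *
            (C^(m+β-2+β) * (t-s)^(-((m+β-2+β)/(m+β-2)))))) := by
          apply mul_le_mul_of_nonneg_left _ (by positivity)
          apply mul_le_mul_of_nonneg_left _ hσα
          exact mul_le_mul_of_nonneg_left hRκβ hσα
      _ = (2*ε^2*β^2*C^(m+β-2+β)) *
            ((t-s)^α * ((t-s)^α * (t-s)^(-((m+β-2+β)/(m+β-2))))) := by ring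
      _ ≤ (2*ε^2*β^2*C^(m+β-2+β)) * (t-s)^(α-1-β/(m+β-2)) := by
          apply mul_le_mul_of_nonneg_left hσ3
          positivity
      _ = 2*ε^2*β^2*C^(m+β-2+β)*(t-s)^(α-1-β/(m+β-2)) := by ring
  -- assemble
  have hkey : ε*α*(t-s)^(α-1)*‖x‖^β
      + (1+‖x‖^m)*(ε*(t-s)^α*β*((d:ℝ)+β-2)*‖x‖^(β-2))
      + (1+‖x‖^m)*((ε*(t-s)^α)^2*β^2*‖x‖^(2*β-2))
      ≤ (ε*α*C^β + 2*ε*β*((d:ℝ)+β)*C^(m+β-2) + 2*ε^2*β^2*C^(m+β-2+β))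
          * (t-s)^(α-1-β/(m+β-2)) := by
    have := add_le_add (add_le_add T1 T2) T3
    linarith
  have hkeyEv := mul_le_mul_of_nonneg_left hkey hEv.le
  have hpos1 : 0 ≤ ‖x‖^(p-1) * (Ev * (ε*(t-s)^α*β*‖x‖^β)) := by
    apply mul_nonneg (Real.rpow_nonneg (norm_nonneg x) _)
    apply mul_nonneg hEv.le
    apply mul_nonneg (mul_nonneg (mul_nonneg hε.le hσα) hβ.le)
      (Real.rpow_nonneg (norm_nonneg x) _)
  have hpos2 : 0 ≤ ‖x‖^r * Ev := mul_nonneg (Real.rpow_nonneg (norm_nonneg x) _) hEv.le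
  rw [hDer, hLap2, hGrad2, hWsx, ge_iff_le]
  linarith [hkeyEv, hpos1, hpos2]
end

section
/- Let k > 2 be a real number and let α, β, γ ≥ 0 and X ≥ 0 be real numbers satisfying X^k ≤ α X^{k/2} + β X^{k−1} + γ X^{k−2}. Then X ≤ (4/3)β + ((4/3)γ)^{1/2} + ((4/3)α²)^{1/k}. -/
theorem polynomial_inequality_bound (k α β γ X : ℝ) (hk : 2 < k)
    (hα : 0 ≤ α) (hβ : 0 ≤ β) (hγ : 0 ≤ γ) (hX : 0 ≤ X)
    (h : X ^ k ≤ α * X ^ (k / 2) + β * X ^ (k - 1) + γ * X ^ (k - 2)) :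
    X ≤ 4 / 3 * β + (4 / 3 * γ) ^ ((1 : ℝ) / 2) + (4 / 3 * α ^ 2) ^ (1 / k) := by
  by_contra hcon
  push_neg at hcon
  set a : ℝ := 4 / 3 * β with ha_def
  set b : ℝ := (4 / 3 * γ) ^ ((1 : ℝ) / 2) with hb_def
  set c : ℝ := (4 / 3 * α ^ 2) ^ (1 / k) with hc_def
  have hkpos : (0 : ℝ) < k := by linarith
  have ha : 0 ≤ a := by positivity
  have hb : 0 ≤ b := Real.rpow_nonneg (by positivity) _
  have hc : 0 ≤ c := Real.rpow_nonneg (by positivity) _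
  have hXpos : 0 < X := lt_of_le_of_lt (by positivity) hcon
  have hb2 : b ^ 2 = 4 / 3 * γ := by
    rw [hb_def, ← Real.rpow_natCast _ 2, ← Real.rpow_mul (by positivity)]
    norm_num
  have hck : c ^ k = 4 / 3 * α ^ 2 := by
    rw [hc_def, ← Real.rpow_mul (by positivity), one_div,
      inv_mul_cancel₀ (ne_of_gt hkpos), Real.rpow_one]
  set s : ℝ := ((3 : ℝ) / 4) ^ ((1 : ℝ) / 2) with hs_def
  have hs_pos : 0 < s := Real.rpow_pos_of_pos (by norm_num) _
  have hs_sq : s ^ 2 = 3 / 4 := by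
    rw [hs_def, ← Real.rpow_natCast _ 2, ← Real.rpow_mul (by norm_num)]
    norm_num
  have hs_lt : s < 1 := Real.rpow_lt_one (by norm_num) (by norm_num) (by norm_num)
  have hs_ge : (3 : ℝ) / 4 ≤ s := by
    calc (3 : ℝ) / 4 = ((3 : ℝ) / 4) ^ (1 : ℝ) := (Real.rpow_one _).symm
      _ ≤ s := Real.rpow_le_rpow_of_exponent_ge (by norm_num) (by norm_num) (by norm_num)
  have hα_eq : α = s * c ^ (k / 2) := by
    have h1 : α ^ 2 = (s * c ^ (k / 2)) ^ 2 := by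
      rw [mul_pow, hs_sq, ← Real.rpow_natCast (c ^ (k / 2)) 2,
        ← Real.rpow_mul hc]
      rw [show k / 2 * ((2 : ℕ) : ℝ) = k by push_cast; ring, hck]
      ring
    have h2 : 0 ≤ s * c ^ (k / 2) := by positivity
    calc α = Real.sqrt (α ^ 2) := (Real.sqrt_sq hα).symm
      _ = Real.sqrt ((s * c ^ (k / 2)) ^ 2) := by rw [h1]
      _ = s * c ^ (k / 2) := Real.sqrt_sq h2
  have hbX : b ≤ X := by linarith
  have hcX : c ≤ X := by linarith
  have hP2 : (0 : ℝ) ≤ X ^ (k - 2) := Real.rpow_nonneg hX _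
  have hP1 : (0 : ℝ) < X ^ (k - 1) := Real.rpow_pos_of_pos hXpos _
  have hPk : (0 : ℝ) < X ^ k := Real.rpow_pos_of_pos hXpos _
  have e1 : X ^ (k - 1) = X * X ^ (k - 2) := by
    rw [show k - 1 = 1 + (k - 2) by ring, Real.rpow_add hXpos, Real.rpow_one]
  have e2 : X ^ k = X * X ^ (k - 1) := by
    rw [show k = 1 + (k - 1) by ring, Real.rpow_add hXpos, Real.rpow_one]
    norm_num
  -- term 1
  have T1 : β * X ^ (k - 1) ≤ s * (a * X ^ (k - 1)) := by
    have hβa : β = 3 / 4 * a := by rw [ha_def]; ring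
    rw [hβa]
    calc 3 / 4 * a * X ^ (k - 1) ≤ s * a * X ^ (k - 1) := mul_le_mul_of_nonneg_right
          (mul_le_mul_of_nonneg_right hs_ge ha) hP1.le
      _ = s * (a * X ^ (k - 1)) := by ring
  -- term 2
  have T2 : γ * X ^ (k - 2) ≤ s * (b * X ^ (k - 1)) := by
    have hγb : γ = 3 / 4 * b ^ 2 := by linarith [hb2]
    rw [hγb, e1]
    calc 3 / 4 * b ^ 2 * X ^ (k - 2) = 3 / 4 * b * (b * X ^ (k - 2)) := by ring
      _ ≤ s * X * (b * X ^ (k - 2)) := mul_le_mul_of_nonneg_right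
          (mul_le_mul hs_ge hbX hb hs_pos.le) (mul_nonneg hb hP2)
      _ = s * (b * (X * X ^ (k - 2))) := by ring
  -- term 3
  have T3 : α * X ^ (k / 2) ≤ s * (c * X ^ (k - 1)) := by
    rw [hα_eq]
    have hsplit : c ^ (k / 2) = c * c ^ (k / 2 - 1) := by
      rw [show k / 2 = 1 + (k / 2 - 1) by ring,
        Real.rpow_add' hc (by rw [show (1 : ℝ) + (k / 2 - 1) = k / 2 by ring]; positivity),
        Real.rpow_one]
      norm_num
    have hle : c ^ (k / 2 - 1) ≤ X ^ (k / 2 - 1) :=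
      Real.rpow_le_rpow hc hcX (by linarith)
    have hmul : X ^ (k / 2 - 1) * X ^ (k / 2) = X ^ (k - 1) := by
      rw [← Real.rpow_add hXpos]; ring_nf
    have hXhalf : (0 : ℝ) ≤ X ^ (k / 2) := Real.rpow_nonneg hX _
    have hfinal : c ^ (k / 2) * X ^ (k / 2) ≤ c * X ^ (k - 1) := by
      rw [hsplit, ← hmul, mul_assoc]
      exact mul_le_mul_of_nonneg_left (mul_le_mul_of_nonneg_right hle hXhalf) hc
    rw [mul_assoc]
    exact mul_le_mul_of_nonneg_left hfinal hs_pos.le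
  have hsum : X ^ k ≤ s * ((a + b + c) * X ^ (k - 1)) := by
    calc X ^ k ≤ α * X ^ (k / 2) + β * X ^ (k - 1) + γ * X ^ (k - 2) := h
      _ ≤ s * (a * X ^ (k - 1)) + s * (b * X ^ (k - 1)) + s * (c * X ^ (k - 1)) := by
          linarith
      _ = s * ((a + b + c) * X ^ (k - 1)) := by ring
  have hlt : s * ((a + b + c) * X ^ (k - 1)) < s * (X * X ^ (k - 1)) := by
    apply mul_lt_mul_of_pos_left _ hs_pos
    exact mul_lt_mul_of_pos_right hcon hP1
  rw [← e2] at hlt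
  have : s * X ^ k < 1 * X ^ k := mul_lt_mul_of_pos_right hs_lt hPk
  rw [one_mul] at this
  linarith
end

section
/- Let s < t be real numbers, let h : [s,t] → [0,∞) be Lebesgue integrable, and let ζ : [s,t] → [0,∞) be continuous. Assume that for every τ ∈ [s,t] one has ζ(t) − ζ(τ) ≥ −∫_τ^t h(σ) ζ(σ) dσ. Then ζ(s) ≤ exp( ∫_s^t h(σ) dσ ) · ζ(t). -/
open MeasureTheory intervalIntegral

lemma backward_gronwall_aux_key (a m : ℝ) (ha0 : 0 ≤ a) (ham : a ≤ m) (hm : m ≤ 1/2) :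
    1 ≤ (1 - a) * Real.exp ((1 + 2*m) * a) := by
  have h1 : a + 2*a^2 ≤ (1+2*m)*a := by nlinarith
  have h2 : 1 + (a + 2*a^2) ≤ Real.exp (a + 2*a^2) := by
    have := Real.add_one_le_exp (a + 2*a^2); linarith
  have h3 : Real.exp (a+2*a^2) ≤ Real.exp ((1+2*m)*a) := Real.exp_le_exp.2 h1
  nlinarith [Real.exp_pos ((1+2*m)*a)]

theorem backward_gronwall (s t : ℝ) (hst : s < t) (h ζ : ℝ → ℝ)
    (hh_int : IntegrableOn h (Set.Icc s t))
    (hh_nonneg : ∀ σ ∈ Set.Icc s t, 0 ≤ h σ)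
    (hζ_cont : ContinuousOn ζ (Set.Icc s t))
    (hζ_nonneg : ∀ σ ∈ Set.Icc s t, 0 ≤ ζ σ)
    (hineq : ∀ τ ∈ Set.Icc s t, ζ t - ζ τ ≥ -∫ σ in τ..t, h σ * ζ σ) :
    ζ s ≤ Real.exp (∫ σ in s..t, h σ) * ζ t := by
  have hst' : s ≤ t := hst.le
  have hsI : s ∈ Set.Icc s t := ⟨le_rfl, hst'⟩
  have htI : t ∈ Set.Icc s t := ⟨hst', le_rfl⟩
  set A := ∫ σ in s..t, h σ with hA
  -- integrability
  have hhz_int : IntegrableOn (fun σ => h σ * ζ σ) (Set.Icc s t) :=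
    hh_int.mul_continuousOn hζ_cont isCompact_Icc
  have hIntHZ : ∀ τ ∈ Set.Icc s t, ∀ τ' ∈ Set.Icc s t,
      IntervalIntegrable (fun σ => h σ * ζ σ) volume τ τ' := fun τ hτ τ' hτ' =>
    (hhz_int.mono_set (Set.uIcc_subset_Icc hτ hτ')).intervalIntegrable
  have hIntH : ∀ τ ∈ Set.Icc s t, ∀ τ' ∈ Set.Icc s t,
      IntervalIntegrable h volume τ τ' := fun τ hτ τ' hτ' =>
    (hh_int.mono_set (Set.uIcc_subset_Icc hτ hτ')).intervalIntegrable
  -- g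
  set g : ℝ → ℝ := fun τ => ζ t + ∫ σ in τ..t, h σ * ζ σ with hgdef
  have hzg : ∀ τ ∈ Set.Icc s t, ζ τ ≤ g τ := by
    intro τ hτ
    have := hineq τ hτ
    simp only [hgdef]
    linarith [this]
  have hg_nonneg : ∀ τ ∈ Set.Icc s t, 0 ≤ g τ := fun τ hτ =>
    (hζ_nonneg τ hτ).trans (hzg τ hτ)
  have hgt : g t = ζ t := by simp [hgdef]
  -- split
  have hsplit : ∀ τ ∈ Set.Icc s t, ∀ τ' ∈ Set.Icc s t,
      g τ = g τ' + ∫ σ in τ..τ', h σ * ζ σ := by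
    intro τ hτ τ' hτ'
    have := intervalIntegral.integral_add_adjacent_intervals
      (hIntHZ τ hτ τ' hτ') (hIntHZ τ' hτ' t htI)
    simp only [hgdef]
    linarith [this]
  -- antitone
  have hg_anti : ∀ τ ∈ Set.Icc s t, ∀ τ' ∈ Set.Icc s t, τ ≤ τ' → g τ' ≤ g τ := by
    intro τ hτ τ' hτ' hle
    have hnn : 0 ≤ ∫ σ in τ..τ', h σ * ζ σ := by
      apply intervalIntegral.integral_nonneg hle
      intro σ hσ
      have hσI : σ ∈ Set.Icc s t := ⟨hτ.1.trans hσ.1, hσ.2.trans hτ'.2⟩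
      exact mul_nonneg (hh_nonneg σ hσI) (hζ_nonneg σ hσI)
    have := hsplit τ hτ τ' hτ'
    linarith
  -- local bound: g τ * (1 - a) ≤ g τ'
  have hlocal : ∀ τ ∈ Set.Icc s t, ∀ τ' ∈ Set.Icc s t, τ ≤ τ' →
      g τ * (1 - (∫ σ in τ..τ', h σ)) ≤ g τ' := by
    intro τ hτ τ' hτ' hle
    have hmono : (∫ σ in τ..τ', h σ * ζ σ) ≤ (∫ σ in τ..τ', h σ * g τ) := by
      apply intervalIntegral.integral_mono_on hle (hIntHZ τ hτ τ' hτ')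
        ((hIntH τ hτ τ' hτ').mul_const (g τ))
      intro σ hσ
      have hσI : σ ∈ Set.Icc s t := ⟨hτ.1.trans hσ.1, hσ.2.trans hτ'.2⟩
      have h1 : ζ σ ≤ g σ := hzg σ hσI
      have h2 : g σ ≤ g τ := hg_anti τ hτ σ hσI hσ.1
      exact mul_le_mul_of_nonneg_left (h1.trans h2) (hh_nonneg σ hσI)
    rw [intervalIntegral.integral_mul_const] at hmono
    have := hsplit τ hτ τ' hτ'
    nlinarith [this, hmono]
  -- primitive u
  set u : ℝ → ℝ := fun x => ∫ σ in s..x, h σ with hudef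
  have hu_cont : ContinuousOn u (Set.Icc s t) := by
    have := intervalIntegral.continuousOn_primitive_interval' (a := s) (b₁ := s) (b₂ := t)
      (f := h) (μ := volume) ?_ ?_
    · simpa [Set.uIcc_of_le hst', hudef] using this
    · exact (hh_int.mono_set (by simp [Set.uIcc_of_le hst'])).intervalIntegrable
    · simp [Set.uIcc_of_le hst', hst']
  have hu_diff : ∀ τ ∈ Set.Icc s t, ∀ τ' ∈ Set.Icc s t,
      u τ' - u τ = ∫ σ in τ..τ', h σ := by
    intro τ hτ τ' hτ'
    have := intervalIntegral.integral_add_adjacent_intervals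
      (hIntH s hsI τ hτ) (hIntH τ hτ τ' hτ')
    simp only [hudef]
    linarith [this]
  have hu_s : u s = 0 := by simp [hudef]
  have hu_t : u t = A := by simp [hudef, hA]
  have hu_mono : ∀ τ ∈ Set.Icc s t, ∀ τ' ∈ Set.Icc s t, τ ≤ τ' → u τ ≤ u τ' := by
    intro τ hτ τ' hτ' hle
    have hd := hu_diff τ hτ τ' hτ'
    have hnn : 0 ≤ ∫ σ in τ..τ', h σ := by
      apply intervalIntegral.integral_nonneg hle
      intro σ hσ
      exact hh_nonneg σ ⟨hτ.1.trans hσ.1, hσ.2.trans hτ'.2⟩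
    linarith
  -- key estimate for each m ∈ (0, 1/2]
  have key : ∀ m : ℝ, 0 < m → m ≤ 1/2 → ζ s ≤ Real.exp ((1 + 2*m) * A) * ζ t := by
    intro m hm0 hm2
    -- uniform continuity of u
    have huc : UniformContinuousOn u (Set.Icc s t) :=
      isCompact_Icc.uniformContinuousOn_of_continuous hu_cont
    rw [Metric.uniformContinuousOn_iff] at huc
    obtain ⟨δ, hδ0, hδ⟩ := huc m hm0
    obtain ⟨n, hn⟩ := exists_nat_gt ((t - s)/δ)
    have hn0 : 0 < (n:ℝ) := lt_of_le_of_lt (div_nonneg (by linarith) hδ0.le) hn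
    have hnN : 0 < n := by exact_mod_cast hn0
    set d : ℝ := (t - s)/n with hd
    have hd0 : 0 < d := div_pos (by linarith) hn0
    have hdδ : d < δ := by
      rw [hd, div_lt_iff₀ hn0]
      calc t - s = ((t-s)/δ) * δ := by field_simp
        _ < n * δ := by exact mul_lt_mul_of_pos_right hn hδ0
        _ = δ * n := by ring
    set τi : ℕ → ℝ := fun i => s + i * d with hτidef
    have hτ0 : τi 0 = s := by simp [hτidef]
    have hτn : τi n = t := by
      simp only [hτidef, hd]
      field_simp
      ring
    have hτmem : ∀ i : ℕ, i ≤ n → τi i ∈ Set.Icc s t := by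
      intro i hi
      constructor
      · simp only [hτidef]; nlinarith [hd0.le, (Nat.cast_nonneg i : (0:ℝ) ≤ i)]
      · have : (i:ℝ) ≤ n := by exact_mod_cast hi
        have : (i:ℝ) * d ≤ n * d := mul_le_mul_of_nonneg_right this hd0.le
        have hnd : (n:ℝ) * d = t - s := by rw [hd]; field_simp
        simp only [hτidef]; linarith
    have hτstep : ∀ i : ℕ, τi (i+1) = τi i + d := by
      intro i; simp only [hτidef]; push_cast; ring
    -- the a_i bound
    have hai : ∀ i : ℕ, i + 1 ≤ n →
        0 ≤ u (τi (i+1)) - u (τi i) ∧ u (τi (i+1)) - u (τi i) ≤ m := by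
      intro i hi
      have h1 : τi i ∈ Set.Icc s t := hτmem i (by omega)
      have h2 : τi (i+1) ∈ Set.Icc s t := hτmem (i+1) hi
      have hle : τi i ≤ τi (i+1) := by rw [hτstep]; linarith
      refine ⟨by linarith [hu_mono _ h1 _ h2 hle], ?_⟩
      have hdist : dist (τi (i+1)) (τi i) < δ := by
        rw [Real.dist_eq, hτstep]
        rw [abs_of_nonneg (by linarith)]
        linarith
      have := hδ _ h2 _ h1 hdist
      rw [Real.dist_eq] at this
      have := le_of_lt (lt_of_le_of_lt (le_abs_self _) this)
      linarith
    -- induction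
    have main : ∀ i : ℕ, i ≤ n → g s ≤ g (τi i) * Real.exp ((1+2*m) * u (τi i)) := by
      intro i
      induction i with
      | zero =>
        intro _
        simp [hτ0, hu_s]
      | succ i ih =>
        intro hi
        have hii : i ≤ n := by omega
        have h1 : τi i ∈ Set.Icc s t := hτmem i hii
        have h2 : τi (i+1) ∈ Set.Icc s t := hτmem (i+1) hi
        have hle : τi i ≤ τi (i+1) := by rw [hτstep]; linarith
        set a := u (τi (i+1)) - u (τi i) with hadef
        obtain ⟨ha0, ham⟩ := hai i hi
        have haint : a = ∫ σ in (τi i)..(τi (i+1)), h σ := by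
          rw [hadef, hu_diff _ h1 _ h2]
        have hloc := hlocal _ h1 _ h2 hle
        rw [← haint] at hloc
        -- g (τi i) ≤ g (τi (i+1)) * exp ((1+2m)*a)
        have hkey := backward_gronwall_aux_key a m ha0 ham hm2
        have hgτ : 0 ≤ g (τi i) := hg_nonneg _ h1
        have hstep : g (τi i) ≤ g (τi (i+1)) * Real.exp ((1+2*m) * a) := by
          calc g (τi i) = g (τi i) * 1 := by ring
            _ ≤ g (τi i) * ((1 - a) * Real.exp ((1+2*m)*a)) :=
                mul_le_mul_of_nonneg_left hkey hgτ
            _ = (g (τi i) * (1 - a)) * Real.exp ((1+2*m)*a) := by ring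
            _ ≤ g (τi (i+1)) * Real.exp ((1+2*m)*a) :=
                mul_le_mul_of_nonneg_right hloc (Real.exp_pos _).le
        calc g s ≤ g (τi i) * Real.exp ((1+2*m) * u (τi i)) := ih hii
          _ ≤ (g (τi (i+1)) * Real.exp ((1+2*m) * a)) * Real.exp ((1+2*m) * u (τi i)) :=
              mul_le_mul_of_nonneg_right hstep (Real.exp_pos _).le
          _ = g (τi (i+1)) * Real.exp ((1+2*m) * u (τi (i+1))) := by
              rw [mul_assoc, ← Real.exp_add]
              congr 2
              rw [hadef]; ring
    have hfin := main n le_rfl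
    rw [hτn, hu_t, hgt] at hfin
    have := hzg s hsI
    calc ζ s ≤ g s := this
      _ ≤ ζ t * Real.exp ((1+2*m) * A) := hfin
      _ = Real.exp ((1+2*m) * A) * ζ t := by ring
  -- pass to the limit m → 0⁺
  have htend : Filter.Tendsto (fun m : ℝ => Real.exp ((1 + 2*m) * A) * ζ t)
      (nhdsWithin 0 (Set.Ioi 0)) (nhds (Real.exp A * ζ t)) := by
    have hc : Continuous (fun m : ℝ => Real.exp ((1 + 2*m) * A) * ζ t) := by fun_prop
    have := hc.tendsto 0
    norm_num at this
    exact this.mono_left nhdsWithin_le_nhds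
  refine ge_of_tendsto htend ?_
  filter_upwards [Ioc_mem_nhdsGT_of_mem (Set.mem_Ico.2 ⟨le_rfl, (by norm_num : (0:ℝ) < 1/2)⟩)] with m hm
  exact key m hm.1 hm.2
end
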